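/- For all y₀, y₁ ∈ {0,…,d−1}, the encoding |Ψ_{y₀y₁}⟩ = X^{y₀} Z^{y₁} |Ψ⟩ satisfies |⟨y₁|F† |Ψ_{y₀y₁}⟩|² = 1/2 + 1/(2√d). -/

import Mathlib

open Matrix Complex Finset

noncomputable section

def ω (d : ℕ) : ℂ := Complex.exp (2 * ↑Real.pi * Complex.I / (d : ℂ))

def Xp (d : ℕ) : Matrix (Fin d) (Fin d) ℂ :=
  Matrix.of fun j k => if (j : ℕ) = ((k : ℕ) + 1) % d then 1 else 0

def Zp (d : ℕ) : Matrix (Fin d) (Fin d) ℂ :=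
  Matrix.diagonal fun j => ω d ^ (j : ℕ)

def Fm (d : ℕ) : Matrix (Fin d) (Fin d) ℂ :=
  Matrix.of fun j k => ω d ^ ((j : ℕ) * (k : ℕ)) / ((Real.sqrt d : ℝ) : ℂ)

def ket (d : ℕ) (y : Fin d) : Fin d → ℂ := fun j => if j = y then 1 else 0

def e0 (d : ℕ) : Fin d → ℂ := fun j => if (j : ℕ) = 0 then 1 else 0

def Psi (d : ℕ) : Fin d → ℂ :=
  (((Real.sqrt (2 * (1 + 1 / Real.sqrt d)) : ℝ) : ℂ))⁻¹ •
    (e0 d + (Fm d).mulVec (e0 d))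

def dotc {d : ℕ} (v w : Fin d → ℂ) : ℂ := ∑ j, (starRingEnd ℂ) (v j) * w j

def outer {d : ℕ} (v : Fin d → ℂ) : Matrix (Fin d) (Fin d) ℂ :=
  Matrix.of fun i j => v i * (starRingEnd ℂ) (v j)

def enc (d : ℕ) (y₀ y₁ : Fin d) : Fin d → ℂ :=
  ((Xp d ^ (y₀ : ℕ)) * (Zp d ^ (y₁ : ℕ))).mulVec (Psi d)

open Fin.NatCast Fin.CommRing
-- auxiliary lemmas
lemma omega_ne_zero (d : ℕ) : ω d ≠ 0 := Complex.exp_ne_zero _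

lemma norm_omega (d : ℕ) : ‖ω d‖ = 1 := by
  unfold ω
  rw [show (2 * ↑Real.pi * Complex.I / (d : ℂ)) = ((2 * Real.pi / d : ℝ) : ℂ) * Complex.I by
    push_cast; ring]
  exact Complex.norm_exp_ofReal_mul_I _

lemma omega_pow_d (d : ℕ) (hd : 0 < d) : ω d ^ d = 1 := by
  unfold ω
  rw [← Complex.exp_nat_mul]
  have hdc : (d : ℂ) ≠ 0 := Nat.cast_ne_zero.mpr hd.ne'
  rw [show (d : ℂ) * (2 * ↑Real.pi * Complex.I / (d : ℂ)) = 2 * ↑Real.pi * Complex.I by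
    field_simp]
  exact Complex.exp_two_pi_mul_I

lemma conj_omega_pow (d : ℕ) (n : ℕ) :
    (starRingEnd ℂ) (ω d ^ n) * (ω d ^ n) = 1 := by
  rw [mul_comm, Complex.mul_conj, Complex.normSq_eq_norm_sq]
  have h : ‖ω d ^ n‖ = 1 := by
    rw [norm_pow, norm_omega, one_pow]
  rw [h]; norm_num

lemma omega_pow_mod_mul (d : ℕ) (hd : 0 < d) (a b : ℕ) :
    ω d ^ ((a % d) * b) = ω d ^ (a * b) := by
  have h : a * b = (a % d) * b + d * (a / d * b) := by
    conv_lhs => rw [← Nat.mod_add_div a d]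
    ring
  have h2 : ω d ^ (d * (a / d * b)) = 1 := by
    rw [pow_mul, omega_pow_d d hd, one_pow]
  rw [h, pow_add, h2, mul_one]

lemma fin_val_zero_iff (d : ℕ) [NeZero d] (k : Fin d) : (k:ℕ) = 0 ↔ k = 0 := by
  constructor
  · exact fun h => Fin.ext h
  · intro h; rw [h]; rfl

lemma Xp_mulVec (d : ℕ) [NeZero d] (hd : 2 ≤ d) (w : Fin d → ℂ) (j : Fin d) :
    (Xp d).mulVec w j = w (j - 1) := by
  simp only [Xp, Matrix.mulVec, dotProduct, Matrix.of_apply]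
  have key : ∀ k : Fin d, ((j:ℕ) = ((k:ℕ)+1) % d) ↔ k = j - 1 := by
    intro k
    have h1 : ((k:ℕ)+1) % d = ((k + 1 : Fin d) : ℕ) := by
      rw [Fin.val_add, Fin.val_one']
      rw [Nat.one_mod_eq_one.mpr (by omega)]
    rw [h1]
    constructor
    · intro h
      have : j = k + 1 := Fin.ext h
      rw [this]; ring
    · intro h
      rw [h]
      congr 1
      rw [sub_add_cancel]
  simp_rw [key]
  simp [ite_mul, Finset.sum_ite_eq']

lemma Xp_pow_mulVec (d : ℕ) [NeZero d] (hd : 2 ≤ d) (n : ℕ) (w : Fin d → ℂ) (j : Fin d) :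
    ((Xp d) ^ n).mulVec w j = w (j - (n : Fin d)) := by
  induction n generalizing j with
  | zero => simp
  | succ n ih =>
    rw [pow_succ', ← Matrix.mulVec_mulVec, Xp_mulVec d hd, ih]
    congr 1
    push_cast
    ring

lemma Zp_pow_mulVec (d : ℕ) (b : ℕ) (v : Fin d → ℂ) (j : Fin d) :
    ((Zp d) ^ b).mulVec v j = ω d ^ ((j : ℕ) * b) * v j := by
  simp [Zp, Matrix.diagonal_pow, Matrix.mulVec_diagonal, pow_mul]

lemma Fm_mulVec_e0 (d : ℕ) [NeZero d] (j : Fin d) :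
    (Fm d).mulVec (e0 d) j = 1 / ((Real.sqrt d : ℝ) : ℂ) := by
  simp only [Fm, e0, Matrix.mulVec, dotProduct, Matrix.of_apply]
  simp_rw [fin_val_zero_iff]
  simp [mul_ite, Finset.sum_ite_eq']

lemma Psi_apply (d : ℕ) [NeZero d] (j : Fin d) :
    Psi d j = (((Real.sqrt (2 * (1 + 1 / Real.sqrt d)) : ℝ) : ℂ))⁻¹ *
      (e0 d j + 1 / ((Real.sqrt d : ℝ) : ℂ)) := by
  simp [Psi, Fm_mulVec_e0 d, Pi.add_apply]

lemma sum_Psi (d : ℕ) [NeZero d] :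
    ∑ j, Psi d j = (((Real.sqrt (2 * (1 + 1 / Real.sqrt d)) : ℝ) : ℂ))⁻¹ *
      (1 + d / ((Real.sqrt d : ℝ) : ℂ)) := by
  simp_rw [Psi_apply d]
  rw [← Finset.mul_sum, Finset.sum_add_distrib]
  congr 2
  · simp only [e0]
    simp_rw [fin_val_zero_iff]
    simp [Finset.sum_ite_eq']
  · rw [Finset.sum_const]
    simp [div_eq_mul_inv]

theorem stmt_3 (d : ℕ) (hd : Nat.Prime d) (y₀ y₁ : Fin d) :
    ‖dotc (ket d y₁) ((Fm d)ᴴ.mulVec (enc d y₀ y₁))‖ ^ 2 = 1 / 2 + 1 / (2 * Real.sqrt d) := by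
  haveI : NeZero d := ⟨hd.pos.ne'⟩
  have hd2 : 2 ≤ d := hd.two_le
  have hdpos : 0 < d := hd.pos
  set s : ℝ := Real.sqrt d with hs_def
  set c : ℝ := Real.sqrt (2 * (1 + 1 / s)) with hc_def
  have hs : 0 < s := Real.sqrt_pos.mpr (by exact_mod_cast hdpos)
  have hs2 : s ^ 2 = d := Real.sq_sqrt (by positivity)
  have hc : 0 < c := Real.sqrt_pos.mpr (by positivity)
  have hc2 : c ^ 2 = 2 * (1 + 1 / s) := Real.sq_sqrt (by positivity)
  -- step 1: dot with ket picks out coordinate y₁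
  have h1 : dotc (ket d y₁) ((Fm d)ᴴ.mulVec (enc d y₀ y₁))
      = ((Fm d)ᴴ.mulVec (enc d y₀ y₁)) y₁ := by
    simp [dotc, ket, apply_ite, Finset.sum_ite_eq']
  -- step 2: expand the conjTranspose mulVec
  have h2 : ((Fm d)ᴴ.mulVec (enc d y₀ y₁)) y₁
      = ∑ j, (starRingEnd ℂ) (Fm d j y₁) * enc d y₀ y₁ j := by
    simp [Matrix.mulVec, dotProduct, Matrix.conjTranspose_apply]
  -- step 3: enc pointwise
  have henc : ∀ j : Fin d, enc d y₀ y₁ j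
      = ω d ^ (((j - y₀ : Fin d) : ℕ) * (y₁ : ℕ)) * Psi d (j - y₀) := by
    intro j
    rw [enc, ← Matrix.mulVec_mulVec, Xp_pow_mulVec d hd2, Fin.cast_val_eq_self,
      Zp_pow_mulVec]
  -- step 4: compute the sum
  have h4 : ∑ j, (starRingEnd ℂ) (Fm d j y₁) * enc d y₀ y₁ j
      = (starRingEnd ℂ) (ω d ^ ((y₀ : ℕ) * (y₁ : ℕ))) / (s : ℂ) * ∑ i, Psi d i := by
    rw [← Equiv.sum_comp (Equiv.addRight y₀)
      (fun j => (starRingEnd ℂ) (Fm d j y₁) * enc d y₀ y₁ j), Finset.mul_sum]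
    refine Finset.sum_congr rfl fun i _ => ?_
    simp only [Equiv.coe_addRight, henc, add_sub_cancel_right]
    have hval : ((i + y₀ : Fin d) : ℕ) = ((i : ℕ) + (y₀ : ℕ)) % d := Fin.val_add _ _
    have hω : ω d ^ (((i + y₀ : Fin d) : ℕ) * (y₁ : ℕ))
        = ω d ^ ((i : ℕ) * (y₁ : ℕ)) * ω d ^ ((y₀ : ℕ) * (y₁ : ℕ)) := by
      rw [hval, omega_pow_mod_mul d hdpos, add_mul, pow_add]
    simp only [Fm, Matrix.of_apply, map_div₀, hω, _root_.map_mul]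
    rw [Complex.conj_ofReal]
    have key := conj_omega_pow d ((i : ℕ) * (y₁ : ℕ))
    linear_combination ((starRingEnd ℂ) (ω d ^ ((y₀ : ℕ) * (y₁ : ℕ))) / ((Real.sqrt d : ℝ) : ℂ) * Psi d i) * key
  -- assemble scalar value
  have h5 : dotc (ket d y₁) ((Fm d)ᴴ.mulVec (enc d y₀ y₁))
      = (starRingEnd ℂ) (ω d ^ ((y₀ : ℕ) * (y₁ : ℕ))) *
        (((c⁻¹ * (1 + d / s) / s : ℝ) : ℂ)) := by
    rw [h1, h2, h4, sum_Psi d]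
    have hcast : (((c⁻¹ * (1 + d / s) / s : ℝ)) : ℂ)
        = ((c : ℝ) : ℂ)⁻¹ * (1 + (d : ℂ) / ((s : ℝ) : ℂ)) / ((s : ℝ) : ℂ) := by
      push_cast
      ring
    rw [hcast]
    ring
  rw [h5]
  rw [norm_mul]
  have hnc : ‖(starRingEnd ℂ) (ω d ^ ((y₀ : ℕ) * (y₁ : ℕ)))‖ = 1 := by
    rw [RCLike.norm_conj, norm_pow, norm_omega, one_pow]
  have hr : (0:ℝ) ≤ c⁻¹ * (1 + d / s) / s := by positivity
  rw [hnc, one_mul, Complex.norm_real, Real.norm_eq_abs, _root_.abs_of_nonneg hr]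
  -- final real computation
  have hds : (d : ℝ) / s = s := by
    rw [← hs2, sq, mul_div_assoc, div_self hs.ne', mul_one]
  rw [hds]
  have e1 : (c⁻¹ * (1 + s) / s) ^ 2 = (1 + s) ^ 2 / (c ^ 2 * s ^ 2) := by
    field_simp
  rw [e1, hc2]
  have h1s : (1:ℝ) + 1/s ≠ 0 := by positivity
  field_simp
  ring
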